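/- Let p ∈ (1,2], μ a Borel probability measure, and g a positive measurable function with g² and g^{2/p} μ-integrable and μ(g^{2/p}) > 0. Then (μ(g²) − μ(g^{2/p})^p)/(p−1) ≤ (p/(2(p−1)²)) · [ μ(g²) − μ(g^{2/p})^p · (μ(g²)/μ(g^{2/p})^p)^{(2/p)−1} ]. -/

import Mathlib

open MeasureTheory

/-- Let `p ∈ (1,2]`, `μ` a Borel probability measure, and `g` a positive
measurable function with `g²` and `g^{2/p}` `μ`-integrable and `μ(g^{2/p}) > 0`.  Then
`(μ(g²) − μ(g^{2/p})^p)/(p−1)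
  ≤ (p/(2(p−1)²)) · [ μ(g²) − μ(g^{2/p})^p · (μ(g²)/μ(g^{2/p})^p)^{2/p−1} ]`. -/
theorem beckner_le_refined_phi_entropy_functional
    {Ω : Type*} [MeasurableSpace Ω] (μ : Measure Ω) [IsProbabilityMeasure μ]
    (p : ℝ) (hp : p ∈ Set.Ioc (1 : ℝ) 2)
    (g : Ω → ℝ) (hg : Measurable g) (hgpos : ∀ x, 0 < g x)
    (hg2 : Integrable (fun x => g x ^ (2 : ℝ)) μ)
    (hgp : Integrable (fun x => g x ^ (2 / p)) μ)
    (hpos : 0 < ∫ x, g x ^ (2 / p) ∂μ) :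
    ((∫ x, g x ^ (2 : ℝ) ∂μ) - (∫ x, g x ^ (2 / p) ∂μ) ^ p) / (p - 1) ≤
      p / (2 * (p - 1) ^ 2) *
        ((∫ x, g x ^ (2 : ℝ) ∂μ) - (∫ x, g x ^ (2 / p) ∂μ) ^ p *
          ((∫ x, g x ^ (2 : ℝ) ∂μ) / (∫ x, g x ^ (2 / p) ∂μ) ^ p) ^ (2 / p - 1)) := by
  obtain ⟨hp1, hp2⟩ := hp
  have hp0 : (0 : ℝ) < p := lt_trans one_pos hp1
  set A := ∫ x, g x ^ (2 : ℝ) ∂μ with hA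
  set B0 := ∫ x, g x ^ (2 / p) ∂μ with hB0
  set B := B0 ^ p with hBdef
  have hB : 0 < B := Real.rpow_pos_of_pos hpos p
  have hcompeq : ((fun t : ℝ => t ^ p) ∘ fun x => g x ^ (2 / p)) =
      fun x => g x ^ (2 : ℝ) := by
    funext x
    simp only [Function.comp]
    rw [← Real.rpow_mul (hgpos x).le, div_mul_cancel₀ _ hp0.ne']
  -- Jensen's inequality : B = B0^p ≤ A
  have hJ : B ≤ A := by
    have h := (convexOn_rpow hp1.le).map_integral_le
      (f := fun x => g x ^ (2 / p)) (μ := μ)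
      (Real.continuous_rpow_const hp0.le).continuousOn isClosed_Ici
      (Filter.Eventually.of_forall fun x => Real.rpow_nonneg (hgpos x).le _)
      hgp (by rw [hcompeq]; exact hg2)
    calc B = B0 ^ p := rfl
      _ ≤ ∫ x, ((fun t : ℝ => t ^ p) ∘ fun x => g x ^ (2 / p)) x ∂μ := h
      _ = A := by rw [hcompeq]
  -- set s := 2/p - 1 ∈ [0,1)
  set s : ℝ := 2 / p - 1 with hs
  have hpm1 : (0 : ℝ) < p - 1 := by linarith
  have hs0 : 0 ≤ s := by
    rw [hs]
    have : 1 ≤ 2 / p := (le_div_iff₀ hp0).mpr (by linarith)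
    linarith
  have hs1 : 1 - s = 2 * (p - 1) / p := by
    field_simp [hs]
    have h' : s * p = 2 - p := by rw [hs, sub_mul, div_mul_cancel₀ _ hp0.ne', one_mul]
    linarith
  -- weighted AM-GM : (A/B)^s ≤ s*(A/B) + (1-s)
  have hAMGM : (A / B) ^ s ≤ s * (A / B) + (1 - s) := by
    have := Real.geom_mean_le_arith_mean2_weighted (w₁ := s) (w₂ := 1 - s)
      (p₁ := A / B) (p₂ := 1) hs0 (by rw [hs1]; positivity)
      (div_nonneg (le_trans hB.le hJ) hB.le) zero_le_one (by ring)
    simpa using this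
  -- hence B*(A/B)^s ≤ s*A + (1-s)*B
  have hkey : B * (A / B) ^ s ≤ s * A + (1 - s) * B := by
    have h2 := mul_le_mul_of_nonneg_left hAMGM hB.le
    calc B * (A / B) ^ s ≤ B * (s * (A / B) + (1 - s)) := h2
      _ = s * A + (1 - s) * B := by field_simp
  -- so A - B*(A/B)^s ≥ (1-s)*(A-B)
  have hlow : (1 - s) * (A - B) ≤ A - B * (A / B) ^ s := by nlinarith
  have hcoef : (0 : ℝ) < p / (2 * (p - 1) ^ 2) :=
    div_pos hp0 (by positivity)
  calc (A - B) / (p - 1)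
      = p / (2 * (p - 1) ^ 2) * ((1 - s) * (A - B)) := by
        rw [hs1]; field_simp
    _ ≤ p / (2 * (p - 1) ^ 2) * (A - B * (A / B) ^ s) :=
        mul_le_mul_of_nonneg_left hlow hcoef.le
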